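/- Let S and A be finite nonempty sets, d a probability vector on S with d(s) > 0 for all s, π(·|s) a probability vector on A with π(a|s) > 0 for all (s,a), and ρ(s,a) = d(s)·π(a|s). Let r : S×A → ℝ and α > 0, ε > 0. Then the infimum of Σ_{s,a} ρ(s,a)·r̃(s,a) over all r̃ : S×A → ℝ satisfying Σ_s d(s)·LSE_A((r(s,·) − r̃(s,·))/α) ≤ ε/α + log|A| equals Σ_{s,a} ρ(s,a)·r(s,a) − ε + α·(Σ_s d(s)·H(π(·|s)) − log|A|), and this infimum is attained by r̃(s,a) = r(s,a) − α·log π(a|s) − ε − α·log|A|. (Policy-entropy reward-robustness duality.) -/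

import Mathlib

open Real Finset

private lemma gibbs_aux {A : Type*} [Fintype A] [Nonempty A] (p v : A → ℝ)
    (hp : ∀ a, 0 < p a) (hp1 : ∑ a, p a = 1) :
    ∑ a, p a * v a - ∑ a, p a * Real.log (p a)
      ≤ Real.log (∑ a, Real.exp (v a)) := by
  set L := Real.log (∑ a, Real.exp (v a)) with hL
  have hpos : 0 < ∑ a, Real.exp (v a) :=
    Finset.sum_pos (fun a _ => Real.exp_pos _) Finset.univ_nonempty
  have hexpL : Real.exp L = ∑ a, Real.exp (v a) := Real.exp_log hpos
  have key : ∀ a : A, p a * (v a - Real.log (p a) - L) ≤ Real.exp (v a - L) - p a := by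
    intro a
    have h1 : v a - Real.log (p a) - L + 1 ≤ Real.exp (v a - Real.log (p a) - L) :=
      Real.add_one_le_exp _
    have h2 : p a * (v a - Real.log (p a) - L) ≤ p a * (Real.exp (v a - Real.log (p a) - L) - 1) :=
      mul_le_mul_of_nonneg_left (by linarith) (hp a).le
    have h3 : p a * Real.exp (v a - Real.log (p a) - L) = Real.exp (v a - L) := by
      rw [show v a - Real.log (p a) - L = (v a - L) - Real.log (p a) by ring,
        Real.exp_sub, Real.exp_log (hp a)]
      field_simp
      exact div_self (hp a).ne'
    nlinarith [h2, h3]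
  have hsum : ∑ a, p a * (v a - Real.log (p a) - L) ≤ ∑ a, (Real.exp (v a - L) - p a) :=
    Finset.sum_le_sum fun a _ => key a
  have hre : ∑ a, (Real.exp (v a - L) - p a) = 0 := by
    rw [Finset.sum_sub_distrib, hp1]
    have : ∑ a, Real.exp (v a - L) = 1 := by
      simp only [Real.exp_sub]
      rw [← Finset.sum_div, ← hexpL, div_self (Real.exp_pos L).ne']
    rw [this]; ring
  have hle : ∑ a, p a * (v a - Real.log (p a) - L)
      = ∑ a, p a * v a - ∑ a, p a * Real.log (p a) - L := by
    have : ∑ a, p a * (v a - Real.log (p a) - L)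
        = ∑ a, (p a * v a - p a * Real.log (p a) - p a * L) :=
      Finset.sum_congr rfl fun a _ => by ring
    rw [this, Finset.sum_sub_distrib, Finset.sum_sub_distrib, ← Finset.sum_mul, hp1]
    ring
  linarith [hsum, hre.le, hle]

/-- **Policy-entropy reward-robustness duality.**
The minimum of the perturbed return over the policy-entropy uncertainty set equals
`∑ ρ r − ε + α (E_d[H(π(·|s))] − log |A|)`, attained at
`r̃(s,a) = r(s,a) − α log π(a|s) − ε − α log |A|`. -/
theorem stmt_3 {S A : Type*} [Fintype S] [Nonempty S] [Fintype A] [Nonempty A]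
    (d : S → ℝ) (pol : S → A → ℝ)
    (hd0 : ∀ s, 0 < d s) (hd1 : ∑ s, d s = 1)
    (hpol0 : ∀ s a, 0 < pol s a) (hpol1 : ∀ s, ∑ a, pol s a = 1)
    (r : S → A → ℝ) (α ε : ℝ) (hα : 0 < α) (hε : 0 < ε) :
    IsLeast
      { x : ℝ | ∃ rt : S → A → ℝ,
          (∑ s, d s * Real.log (∑ a, Real.exp ((r s a - rt s a) / α))
            ≤ ε / α + Real.log (Fintype.card A)) ∧
          x = ∑ s, ∑ a, (d s * pol s a) * rt s a }
      ((∑ s, ∑ a, (d s * pol s a) * r s a) - ε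
        + α * ((∑ s, d s * (-∑ a, pol s a * Real.log (pol s a)))
            - Real.log (Fintype.card A))) ∧
    (∑ s, d s * Real.log (∑ a, Real.exp
        ((r s a - (r s a - α * Real.log (pol s a) - ε - α * Real.log (Fintype.card A))) / α))
      ≤ ε / α + Real.log (Fintype.card A)) ∧
    (∑ s, ∑ a, (d s * pol s a) *
        (r s a - α * Real.log (pol s a) - ε - α * Real.log (Fintype.card A))
      = (∑ s, ∑ a, (d s * pol s a) * r s a) - ε
        + α * ((∑ s, d s * (-∑ a, pol s a * Real.log (pol s a)))
            - Real.log (Fintype.card A))) := by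
  set logA := Real.log (Fintype.card A) with hlogA
  -- Part 2 : the candidate satisfies the constraint (with equality)
  have h2 : ∑ s, d s * Real.log (∑ a, Real.exp
        ((r s a - (r s a - α * Real.log (pol s a) - ε - α * logA)) / α))
      ≤ ε / α + logA := by
    have hterm : ∀ s, Real.log (∑ a, Real.exp
        ((r s a - (r s a - α * Real.log (pol s a) - ε - α * logA)) / α)) = ε / α + logA := by
      intro s
      have harg : ∀ a, (r s a - (r s a - α * Real.log (pol s a) - ε - α * logA)) / α
          = Real.log (pol s a) + (ε / α + logA) := by
        intro a; field_simp; ring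
      have hsum : ∑ a, Real.exp
          ((r s a - (r s a - α * Real.log (pol s a) - ε - α * logA)) / α)
          = Real.exp (ε / α + logA) := by
        rw [Finset.sum_congr rfl fun a _ => by
          rw [harg a, Real.exp_add, Real.exp_log (hpol0 s a)]]
        rw [← Finset.sum_mul, hpol1 s, one_mul]
      rw [hsum, Real.log_exp]
    calc ∑ s, d s * Real.log (∑ a, Real.exp
          ((r s a - (r s a - α * Real.log (pol s a) - ε - α * logA)) / α))
        = ∑ s, d s * (ε / α + logA) := Finset.sum_congr rfl fun s _ => by rw [hterm s]
      _ = ε / α + logA := by rw [← Finset.sum_mul, hd1, one_mul]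
      _ ≤ ε / α + logA := le_rfl
  -- Part 3 : value of the candidate
  have h3 : ∑ s, ∑ a, (d s * pol s a) *
        (r s a - α * Real.log (pol s a) - ε - α * logA)
      = (∑ s, ∑ a, (d s * pol s a) * r s a) - ε
        + α * ((∑ s, d s * (-∑ a, pol s a * Real.log (pol s a))) - logA) := by
    have hinner : ∀ s, ∑ a, (d s * pol s a) *
          (r s a - α * Real.log (pol s a) - ε - α * logA)
        = (∑ a, (d s * pol s a) * r s a)
          + α * (d s * (-∑ a, pol s a * Real.log (pol s a)))
          - ε * d s - α * logA * d s := by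
      intro s
      have : ∑ a, (d s * pol s a) * (r s a - α * Real.log (pol s a) - ε - α * logA)
          = ∑ a, ((d s * pol s a) * r s a
              - α * d s * (pol s a * Real.log (pol s a))
              - ε * d s * pol s a - α * logA * d s * pol s a) :=
        Finset.sum_congr rfl fun a _ => by ring
      rw [this, Finset.sum_sub_distrib, Finset.sum_sub_distrib, Finset.sum_sub_distrib,
        ← Finset.mul_sum, ← Finset.mul_sum, ← Finset.mul_sum, hpol1 s]
      ring
    rw [Finset.sum_congr rfl fun s _ => hinner s]
    rw [Finset.sum_sub_distrib, Finset.sum_sub_distrib, Finset.sum_add_distrib,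
      ← Finset.mul_sum, ← Finset.mul_sum, ← Finset.mul_sum, hd1]
    ring
  refine ⟨⟨⟨fun s a => r s a - α * Real.log (pol s a) - ε - α * logA, h2, h3.symm⟩, ?_⟩, h2, h3⟩
  -- lower bound
  rintro x ⟨rt, hc, rfl⟩
  set R := ∑ s, ∑ a, (d s * pol s a) * r s a with hR
  set X := ∑ s, ∑ a, (d s * pol s a) * rt s a with hX
  set Hbar := ∑ s, d s * (-∑ a, pol s a * Real.log (pol s a)) with hHbar
  have hg : ∀ s, d s * (∑ a, pol s a * ((r s a - rt s a) / α)
        - ∑ a, pol s a * Real.log (pol s a))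
      ≤ d s * Real.log (∑ a, Real.exp ((r s a - rt s a) / α)) := fun s =>
    mul_le_mul_of_nonneg_left
      (gibbs_aux (pol s) (fun a => (r s a - rt s a) / α) (hpol0 s) (hpol1 s)) (hd0 s).le
  have hsum_le : ∑ s, d s * (∑ a, pol s a * ((r s a - rt s a) / α)
        - ∑ a, pol s a * Real.log (pol s a)) ≤ ε / α + logA :=
    le_trans (Finset.sum_le_sum fun s _ => hg s) hc
  have hLHS : ∑ s, d s * (∑ a, pol s a * ((r s a - rt s a) / α)
        - ∑ a, pol s a * Real.log (pol s a))
      = (1 / α) * (R - X) + Hbar := by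
    have hstep : ∀ s, d s * (∑ a, pol s a * ((r s a - rt s a) / α)
          - ∑ a, pol s a * Real.log (pol s a))
        = (1 / α) * ((∑ a, (d s * pol s a) * r s a) - (∑ a, (d s * pol s a) * rt s a))
          + d s * (-∑ a, pol s a * Real.log (pol s a)) := by
      intro s
      have h1 : d s * ∑ a, pol s a * ((r s a - rt s a) / α)
          = (1 / α) * ((∑ a, (d s * pol s a) * r s a) - (∑ a, (d s * pol s a) * rt s a)) := by
        rw [Finset.mul_sum, ← Finset.sum_sub_distrib, Finset.mul_sum]
        exact Finset.sum_congr rfl fun a _ => by ring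
      rw [mul_sub, h1]; ring
    rw [Finset.sum_congr rfl fun s _ => hstep s, Finset.sum_add_distrib, ← Finset.mul_sum,
      ← Finset.sum_sub_distrib]
  rw [hLHS] at hsum_le
  -- from (1/α)(R − X) + Hbar ≤ ε/α + logA deduce the bound
  have hmul := mul_le_mul_of_nonneg_left hsum_le hα.le
  have e1 : α * ((1 / α) * (R - X) + Hbar) = (R - X) + α * Hbar := by
    field_simp
  have e2 : α * (ε / α + logA) = ε + α * logA := by
    field_simp
  rw [e1, e2] at hmul
  show R - ε + α * (Hbar - logA) ≤ X
  nlinarith [hmul]
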